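/- The set S = {i(G)/c(G) : G a finite group} is dense in [0, 1], where i(G) = |{x ∈ G : x^2 = 1}| and c(G) is the number of cyclic subgroups of G. -/

import Mathlib

noncomputable def numInv (G : Type*) [Group G] : ℕ := Nat.card {x : G // x ^ 2 = 1}

noncomputable def numCyc (G : Type*) [Group G] : ℕ := Nat.card {H : Subgroup G // IsCyclic H}

open Subgroup

section helpers
variable {G : Type*} [Group G]

lemma isCyclic_zpowers (g : G) : IsCyclic (zpowers g) := by
  refine ⟨⟨⟨g, mem_zpowers g⟩, fun x => ?_⟩⟩
  obtain ⟨x, hx⟩ := x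
  obtain ⟨k, hk⟩ := hx
  exact ⟨k, by ext; simpa using hk⟩

lemma exists_zpowers_eq (C : Subgroup G) [hC : IsCyclic C] : ∃ g : G, zpowers g = C := by
  obtain ⟨⟨g, hg⟩, h⟩ := hC.exists_generator
  refine ⟨g, le_antisymm (zpowers_le.2 hg) fun x hx => ?_⟩
  obtain ⟨k, hk⟩ := h ⟨x, hx⟩
  exact ⟨k, by simpa using congrArg Subtype.val hk⟩

lemma mem_zpowers_of_sq (a : G) (ha : a ^ 2 = 1) {x : G} (hx : x ∈ zpowers a) :
    x = 1 ∨ x = a := by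
  obtain ⟨k, rfl⟩ := hx
  rcases Int.even_or_odd k with ⟨m, rfl⟩ | ⟨m, rfl⟩
  · left
    show a ^ (m + m) = 1
    rw [← two_mul, zpow_mul]
    norm_cast
    rw [ha, one_zpow]
  · right
    show a ^ (2 * m + 1) = a
    rw [zpow_add, zpow_mul]
    norm_cast
    rw [ha]
    simp
end helpers

section prodlemma
variable {K H : Type*} [Group K] [Group H] [Finite K] [Finite H]

lemma zpowers_pair_eq_prod (a : K) (b : H)
    (hco : Nat.Coprime (orderOf a) (orderOf b)) :
    zpowers (a, b) = (zpowers a).prod (zpowers b) := by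
  have hle : zpowers (a, b) ≤ (zpowers a).prod (zpowers b) := by
    rintro x ⟨k, rfl⟩
    exact ⟨⟨k, rfl⟩, ⟨k, rfl⟩⟩
  refine Subgroup.eq_of_le_of_card_ge hle (le_of_eq ?_)
  have h1 : Nat.card ((zpowers a).prod (zpowers b)) =
      Nat.card (zpowers a) * Nat.card (zpowers b) := by
    rw [Nat.card_congr ((zpowers a).prodEquiv (zpowers b)).toEquiv, Nat.card_prod]
  rw [h1, Nat.card_zpowers, Nat.card_zpowers, Nat.card_zpowers, Prod.orderOf,
    Nat.Coprime.lcm_eq_mul hco]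

lemma sq_one_zpow_odd {G : Type*} [Group G] {a : G} (ha : a ^ 2 = 1) {m : ℤ} (hm : Odd m) :
    a ^ m = a := by
  obtain ⟨n, rfl⟩ := hm
  show a ^ (2 * n + 1) = a
  rw [zpow_add, zpow_mul]
  norm_cast
  rw [ha]
  simp

lemma eq_of_zpowers_eq_sq {G : Type*} [Group G] {a a' : G} (h : zpowers a' = zpowers a)
    (ha : a ^ 2 = 1) : a' = a := by
  rcases eq_or_ne a 1 with rfl | hne
  · have : a' ∈ zpowers a' := mem_zpowers a'
    rw [h, zpowers_one_eq_bot] at this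
    simpa using this
  · have h1 : a' ∈ zpowers a := h ▸ mem_zpowers a'
    rcases mem_zpowers_of_sq a ha h1 with rfl | rfl
    · exfalso
      have : a ∈ zpowers (1 : G) := h.symm ▸ mem_zpowers a
      rw [zpowers_one_eq_bot] at this
      exact hne (by simpa using this)
    · rfl

lemma pair_mem_zpowers {K H : Type*} [Group K] [Group H] [Finite H] {a : K} (ha : a ^ 2 = 1)
    {b b' : H} (h : zpowers b' = zpowers b) : (a, b') ∈ zpowers (a, b) := by
  have hord : orderOf b' = orderOf b := by
    rw [← Nat.card_zpowers, ← Nat.card_zpowers, h]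
  obtain ⟨m, hm⟩ : b' ∈ zpowers b := h ▸ mem_zpowers b'
  replace hm : b ^ m = b' := hm
  rcases Int.even_or_odd m with hme | hmo
  · rcases Nat.even_or_odd (orderOf b) with hoe | hoo
    · -- contradiction: orderOf b' < orderOf b
      exfalso
      obtain ⟨r, hr⟩ := hoe
      have hrpos : 0 < r := by
        have : 0 < orderOf b := orderOf_pos b
        omega
      obtain ⟨n, rfl⟩ := hme
      have hb' : b' ^ (r : ℤ) = 1 := by
        rw [← hm, ← zpow_mul]
        have : (n + n) * (r : ℤ) = (orderOf b : ℤ) * n := by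
          rw [hr]; push_cast; ring
        rw [this, zpow_mul, zpow_natCast, pow_orderOf_eq_one, one_zpow]
      have hdvd : orderOf b' ∣ r := orderOf_dvd_of_pow_eq_one (by exact_mod_cast hb')
      have := Nat.le_of_dvd hrpos hdvd
      omega
    · -- shift exponent by orderOf b
      refine ⟨m + orderOf b, ?_⟩
      have hodd : Odd (m + (orderOf b : ℤ)) := by
        rcases hme with ⟨n, rfl⟩
        rcases hoo with ⟨t, ht⟩
        exact ⟨n + t, by push_cast [ht]; ring⟩
      show (a, b) ^ (m + (orderOf b : ℤ)) = (a, b')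
      have : (a, b) ^ (m + (orderOf b : ℤ)) = (a ^ (m + (orderOf b : ℤ)), b ^ (m + (orderOf b : ℤ))) := rfl
      rw [this, sq_one_zpow_odd ha hodd]
      have : b ^ (m + (orderOf b : ℤ)) = b' := by
        rw [zpow_add, hm, zpow_natCast, pow_orderOf_eq_one, mul_one]
      rw [this]
  · refine ⟨m, ?_⟩
    show (a, b) ^ m = (a, b')
    have : (a, b) ^ m = (a ^ m, b ^ m) := rfl
    rw [this, sq_one_zpow_odd ha hmo]
    exact congrArg _ hm

lemma zpowers_pair_eq_zpowers_pair {K H : Type*} [Group K] [Group H] [Finite H]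
    {a : K} (ha : a ^ 2 = 1) {b b' : H} (h : zpowers b' = zpowers b) :
    zpowers (a, b') = zpowers (a, b) :=
  le_antisymm (zpowers_le.2 (pair_mem_zpowers ha h))
    (zpowers_le.2 (pair_mem_zpowers ha h.symm))

lemma isCyclic_map {G G' : Type*} [Group G] [Group G'] (f : G →* G') (C : Subgroup G)
    (hC : IsCyclic C) : IsCyclic (C.map f) := by
  obtain ⟨g, rfl⟩ := exists_zpowers_eq C
  rw [MonoidHom.map_zpowers]
  exact _root_.isCyclic_zpowers _

lemma numCyc_prod (hK : ∀ x : K, x ^ 2 = 1 ∨ Nat.Coprime (orderOf x) (Nat.card H)) :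
    numCyc (K × H) = numCyc K * numCyc H := by
  classical
  have key : ∀ C C' : Subgroup (K × H), IsCyclic C → IsCyclic C' →
      C.map (MonoidHom.fst K H) = C'.map (MonoidHom.fst K H) →
      C.map (MonoidHom.snd K H) = C'.map (MonoidHom.snd K H) → C = C' := by
    intro C C' hC hC' h1 h2
    obtain ⟨g, rfl⟩ := exists_zpowers_eq C
    obtain ⟨g', rfl⟩ := exists_zpowers_eq C'
    obtain ⟨a, b⟩ := g
    obtain ⟨a', b'⟩ := g'
    rw [MonoidHom.map_zpowers, MonoidHom.map_zpowers] at h1 h2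
    simp only [MonoidHom.coe_fst, MonoidHom.coe_snd] at h1 h2
    rcases hK a with ha | hco
    · have ha' : a' = a := eq_of_zpowers_eq_sq (by rw [h1]) ha
      subst ha'
      exact (zpowers_pair_eq_zpowers_pair ha h2.symm).symm
    · have hb : Nat.Coprime (orderOf a) (orderOf b) :=
        hco.coprime_dvd_right (orderOf_dvd_natCard b)
      have horda : orderOf a' = orderOf a := by
        rw [← Nat.card_zpowers, ← Nat.card_zpowers, h1]
      have hb' : Nat.Coprime (orderOf a') (orderOf b') := by
        rw [horda]
        exact hco.coprime_dvd_right (orderOf_dvd_natCard b')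
      rw [zpowers_pair_eq_prod a b hb, zpowers_pair_eq_prod a' b' hb', h1, h2]
  let F : {C : Subgroup (K × H) // IsCyclic C} →
      {A : Subgroup K // IsCyclic A} × {B : Subgroup H // IsCyclic B} :=
    fun C => (⟨C.1.map (MonoidHom.fst K H), isCyclic_map _ _ C.2⟩,
      ⟨C.1.map (MonoidHom.snd K H), isCyclic_map _ _ C.2⟩)
  have hbij : Function.Bijective F := by
    constructor
    · intro C C' h
      obtain ⟨h1, h2⟩ := Prod.mk.injEq .. ▸ h
      exact Subtype.ext (key _ _ C.2 C'.2 (congrArg Subtype.val h1) (congrArg Subtype.val h2))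
    · rintro ⟨⟨A, hA⟩, ⟨B, hB⟩⟩
      obtain ⟨a, rfl⟩ := exists_zpowers_eq A
      obtain ⟨b, rfl⟩ := exists_zpowers_eq B
      refine ⟨⟨zpowers (a, b), _root_.isCyclic_zpowers _⟩, ?_⟩
      simp only [F, MonoidHom.map_zpowers, MonoidHom.coe_fst, MonoidHom.coe_snd]
  rw [numCyc, numCyc, numCyc, Nat.card_eq_of_bijective F hbij, Nat.card_prod]

lemma numInv_prod : numInv (K × H) = numInv K * numInv H := by
  rw [numInv, numInv, numInv, ← Nat.card_prod]
  apply Nat.card_congr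
  refine (Equiv.subtypeEquivRight ?_).trans Equiv.subtypeProdEquivProd
  intro x
  show x ^ 2 = 1 ↔ x.1 ^ 2 = 1 ∧ x.2 ^ 2 = 1
  simp [Prod.ext_iff]
end prodlemma

section dihedral
open DihedralGroup
variable {p : ℕ} [Fact p.Prime] (hodd : p ≠ 2)

instance : NeZero p := ⟨(Fact.out (p := p.Prime)).ne_zero⟩

lemma natCard_dihedral : Nat.card (DihedralGroup p) = 2 * p := by
  rw [Nat.card_eq_fintype_card, DihedralGroup.card]

lemma sr_sq (i : ZMod p) : (sr i : DihedralGroup p) ^ 2 = 1 := by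
  rw [pow_two, sr_mul_self]

lemma dihedral_hyp {M : ℕ} (hM : ¬ p ∣ M) :
    ∀ x : DihedralGroup p, x ^ 2 = 1 ∨ Nat.Coprime (orderOf x) M := by
  intro x
  cases x with
  | r i =>
    right
    have hdvd : orderOf (r i : DihedralGroup p) ∣ p := by
      rw [orderOf_r]
      exact Nat.div_dvd_of_dvd (Nat.gcd_dvd_left p i.val)
    rcases (Fact.out (p := p.Prime)).eq_one_or_self_of_dvd _ hdvd with h | h
    · rw [h]; exact Nat.coprime_one_left M
    · rw [h]; exact ((Fact.out (p := p.Prime)).coprime_iff_not_dvd).2 hM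
  | sr i => exact Or.inl (sr_sq i)

include hodd in
lemma numInv_dihedral : numInv (DihedralGroup p) = p + 1 := by
  have hset : {x : DihedralGroup p | x ^ 2 = 1} = insert (1 : DihedralGroup p) (Set.range sr) := by
    ext x
    cases x with
    | r i =>
      simp only [Set.mem_setOf_eq, Set.mem_insert_iff, Set.mem_range]
      constructor
      · intro h
        left
        rw [pow_two, r_mul_r, one_def] at h
        injection h with h'
        have h2 : (2 : ZMod p) * i = 0 := by rw [two_mul]; exact h'
        have h2ne : (2 : ZMod p) ≠ 0 := by
          intro hc
          have : p ∣ 2 := by exact_mod_cast (ZMod.natCast_eq_zero_iff 2 p).1 (by exact_mod_cast hc)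
          have := (Nat.prime_dvd_prime_iff_eq (Fact.out) Nat.prime_two).1 this
          exact hodd this
        have hi : i = 0 := by
          rcases mul_eq_zero.1 h2 with hc | hc
          · exact absurd hc h2ne
          · exact hc
        rw [hi, one_def]
      · rintro (h | ⟨y, hy⟩)
        · rw [h]; exact one_pow 2
        · exact absurd hy (by simp)
    | sr i =>
      simp only [Set.mem_setOf_eq, Set.mem_insert_iff, Set.mem_range]
      exact ⟨fun _ => Or.inr ⟨i, rfl⟩, fun _ => sr_sq i⟩
  have : numInv (DihedralGroup p) = Set.ncard {x : DihedralGroup p | x ^ 2 = 1} :=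
    Nat.card_coe_set_eq _ ▸ rfl
  rw [this, hset, Set.ncard_insert_of_notMem (by simp [one_def, -r_zero]) (Set.toFinite _)]
  have : (Set.range (sr : ZMod p → DihedralGroup p)).ncard = p := by
    rw [← Nat.card_coe_set_eq, Nat.card_range_of_injective (f := (sr : ZMod p → DihedralGroup p))
      (fun a b h => by simpa using h), Nat.card_zmod]
  omega
end dihedral

section dihedral2
open DihedralGroup
variable {p : ℕ} [Fact p.Prime] (hodd : p ≠ 2)

include hodd in
lemma numCyc_dihedral : numCyc (DihedralGroup p) = p + 2 := by
  classical
  have hp : p.Prime := Fact.out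
  have hRcard : Nat.card (zpowers (r 1 : DihedralGroup p)) = p := by
    rw [Nat.card_zpowers, orderOf_r_one]
  have hZcard : ∀ i : ZMod p, Nat.card (zpowers (sr i : DihedralGroup p)) = 2 := by
    intro i
    rw [Nat.card_zpowers, orderOf_sr]
  have hset : {C : Subgroup (DihedralGroup p) | IsCyclic C} =
      insert ⊥ (insert (zpowers (r 1))
        (Set.range fun i : ZMod p => zpowers (sr i : DihedralGroup p))) := by
    ext C
    simp only [Set.mem_setOf_eq, Set.mem_insert_iff, Set.mem_range]
    constructor
    · intro hC
      obtain ⟨g, rfl⟩ := exists_zpowers_eq C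
      cases g with
      | r i =>
        rcases eq_or_ne i 0 with rfl | hne
        · left
          rw [← one_def, zpowers_one_eq_bot]
        · right; left
          have hle : zpowers (r i : DihedralGroup p) ≤ zpowers (r 1) := by
            apply zpowers_le.2
            refine ⟨(i.val : ℤ), ?_⟩
            show (r 1 : DihedralGroup p) ^ (i.val : ℤ) = r i
            rw [zpow_natCast, r_one_pow]
            congr 1
            simp [ZMod.natCast_val, ZMod.cast_id]
          have hord : orderOf (r i : DihedralGroup p) = p := by
            rw [orderOf_r]
            have hiv : i.val ≠ 0 := fun hc => hne (by rwa [← ZMod.val_eq_zero])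
            have : Nat.gcd p i.val = 1 := hp.coprime_iff_not_dvd.2 (fun hd => by
              have h1 := Nat.le_of_dvd (Nat.pos_of_ne_zero hiv) hd
              have h2 := ZMod.val_lt i
              omega)
            rw [this, Nat.div_one]
          apply Subgroup.eq_of_le_of_card_ge hle
          rw [hRcard, Nat.card_zpowers, hord]
      | sr i =>
        right; right
        exact ⟨i, rfl⟩
    · rintro (rfl | rfl | ⟨i, rfl⟩)
      · exact Bot.isCyclic
      · exact _root_.isCyclic_zpowers _
      · exact _root_.isCyclic_zpowers _
  have hstart : numCyc (DihedralGroup p) = Set.ncard {C : Subgroup (DihedralGroup p) | IsCyclic C} :=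
    Nat.card_coe_set_eq _ ▸ rfl
  rw [hstart, hset]
  have hp3 : 3 ≤ p := by
    have h2 := hp.two_le
    rcases Nat.lt_or_ge p 3 with h | h
    · interval_cases p
      · exact absurd rfl hodd
    · exact h
  have hZinj : Function.Injective (fun i : ZMod p => zpowers (sr i : DihedralGroup p)) := by
    intro i j hij
    replace hij : zpowers (sr i : DihedralGroup p) = zpowers (sr j) := hij
    have hmem : (sr i : DihedralGroup p) ∈ zpowers (sr j) := by
      rw [← hij]; exact mem_zpowers _
    rcases mem_zpowers_of_sq _ (sr_sq j) hmem with h | h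
    · rw [one_def] at h
      exact absurd h (fun hc => by cases hc)
    · injection h
  have hRne : zpowers (r 1 : DihedralGroup p) ∉
      Set.range fun i : ZMod p => zpowers (sr i : DihedralGroup p) := by
    rintro ⟨i, hi⟩
    replace hi : zpowers (sr i : DihedralGroup p) = zpowers (r 1) := hi
    have := hZcard i
    rw [hi, hRcard] at this
    omega
  have hbne : (⊥ : Subgroup (DihedralGroup p)) ∉ insert (zpowers (r 1))
      (Set.range fun i : ZMod p => zpowers (sr i : DihedralGroup p)) := by
    rintro (h | ⟨i, hi⟩)
    · rw [← h, Subgroup.card_bot] at hRcard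
      omega
    · replace hi : zpowers (sr i : DihedralGroup p) = ⊥ := hi
      have := hZcard i
      rw [hi, Subgroup.card_bot] at this
      omega
  rw [Set.ncard_insert_of_notMem hbne (Set.toFinite _),
    Set.ncard_insert_of_notMem hRne (Set.toFinite _)]
  have hrange : (Set.range fun i : ZMod p => zpowers (sr i : DihedralGroup p)).ncard = p := by
    rw [← Nat.card_coe_set_eq, Nat.card_range_of_injective hZinj, Nat.card_zmod]
  omega
end dihedral2

section glist

def GG : List ℕ → Type
  | [] => Unit
  | p :: l => DihedralGroup p × GG l

instance GG.group : (l : List ℕ) → Group (GG l)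
  | [] => inferInstanceAs (Group Unit)
  | p :: l => letI := GG.group l; inferInstanceAs (Group (DihedralGroup p × GG l))

lemma GG.finite (l : List ℕ) (h : ∀ p ∈ l, p ≠ 0) : Finite (GG l) := by
  induction l with
  | nil => exact inferInstanceAs (Finite Unit)
  | cons p l ih =>
    haveI : NeZero p := ⟨h p List.mem_cons_self⟩
    haveI := ih (fun q hq => h q (List.mem_cons_of_mem p hq))
    exact inferInstanceAs (Finite (DihedralGroup p × GG l))

lemma numInv_unit : numInv Unit = 1 := by
  haveI : Unique {x : Unit // x ^ 2 = 1} := ⟨⟨⟨(), rfl⟩⟩, fun x => Subtype.ext rfl⟩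
  exact Nat.card_unique

lemma numCyc_unit : numCyc Unit = 1 := by
  haveI : Unique {H : Subgroup Unit // IsCyclic H} :=
    ⟨⟨⊥, Bot.isCyclic⟩, fun H => Subtype.ext (Subsingleton.elim _ _)⟩
  exact Nat.card_unique

lemma GG.counts : ∀ (l : List ℕ), (∀ p ∈ l, p.Prime ∧ p ≠ 2) → l.Nodup →
    numInv (GG l) = (l.map (· + 1)).prod ∧
    numCyc (GG l) = (l.map (· + 2)).prod ∧
    Nat.card (GG l) = (l.map (2 * ·)).prod := by
  intro l
  induction l with
  | nil =>
    intro _ _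
    exact ⟨numInv_unit, numCyc_unit, by show Nat.card Unit = _; simp⟩
  | cons p l ih =>
    intro hl hnd
    obtain ⟨hp, hp2⟩ := hl p List.mem_cons_self
    haveI : Fact p.Prime := ⟨hp⟩
    have hl' : ∀ q ∈ l, q.Prime ∧ q ≠ 2 := fun q hq => hl q (List.mem_cons_of_mem p hq)
    obtain ⟨h1, h2, h3⟩ := ih hl' hnd.of_cons
    haveI : Finite (GG l) := GG.finite l (fun q hq => (hl' q hq).1.ne_zero)
    have hpM : ¬ p ∣ Nat.card (GG l) := by
      rw [h3]
      intro hdvd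
      obtain ⟨a, ha, hpa⟩ := (Nat.Prime.prime hp).dvd_prod_iff.1 hdvd
      obtain ⟨q, hq, rfl⟩ := List.mem_map.1 ha
      rcases (Nat.Prime.dvd_mul hp).1 hpa with h | h
      · exact hp2 ((Nat.prime_dvd_prime_iff_eq hp Nat.prime_two).1 h)
      · have := (Nat.prime_dvd_prime_iff_eq hp (hl' q hq).1).1 h
        subst this
        exact (List.nodup_cons.1 hnd).1 hq
    refine ⟨?_, ?_, ?_⟩
    · show numInv (DihedralGroup p × GG l) = _
      rw [numInv_prod, numInv_dihedral hp2, h1, List.map_cons, List.prod_cons]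
    · show numCyc (DihedralGroup p × GG l) = _
      rw [numCyc_prod (dihedral_hyp hpM), numCyc_dihedral hp2, h2, List.map_cons, List.prod_cons]
    · show Nat.card (DihedralGroup p × GG l) = _
      rw [Nat.card_prod, natCard_dihedral, h3, List.map_cons, List.prod_cons]
end glist

section analytic
open Finset

noncomputable def fp (q : ℕ) : ℝ := ((q : ℝ) + 1) / ((q : ℝ) + 2)

lemma fp_pos (q : ℕ) : 0 < fp q := by
  unfold fp; positivity

lemma fp_le_one (q : ℕ) : fp q ≤ 1 := by
  unfold fp
  rw [div_le_one (by positivity)]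
  linarith

lemma fp_eq (q : ℕ) : fp q = 1 - 1 / ((q : ℝ) + 2) := by
  unfold fp
  rw [eq_sub_iff_add_eq, ← add_div, div_eq_one_iff_eq (by positivity)]
  ring

lemma not_summable_g (N : ℕ) :
    ¬ Summable (fun q : ℕ => if q.Prime ∧ N ≤ q then 1 / ((q : ℝ) + 2) else 0) := by
  intro hs
  have hg2 : Summable (fun q : ℕ => if q.Prime ∧ N ≤ q then 1 / (q : ℝ) else 0) := by
    refine Summable.of_nonneg_of_le (fun q => by positivity) (fun q => ?_) (hs.mul_left 3)
    by_cases h : q.Prime ∧ N ≤ q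
    · rw [if_pos h, if_pos h, mul_one_div]
      have hq1 : (2 : ℝ) ≤ q := by exact_mod_cast h.1.two_le
      rw [div_le_div_iff₀ (by linarith) (by linarith)]
      linarith
    · rw [if_neg h, if_neg h, mul_zero]
  have hg3 : Summable (fun q : ℕ => if q.Prime ∧ q < N then 1 / (q : ℝ) else 0) := by
    apply summable_of_finite_support
    apply Set.Finite.subset (Set.finite_Iio N)
    intro q hq
    simp only [Function.mem_support] at hq
    by_cases h : q.Prime ∧ q < N
    · exact h.2
    · simp [h] at hq
  apply not_summable_one_div_on_primes
  have heq : (Set.indicator {p | Nat.Prime p} fun n : ℕ => (1 : ℝ) / n) =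
      (fun q : ℕ => if q.Prime ∧ N ≤ q then 1 / (q : ℝ) else 0)
      + (fun q : ℕ => if q.Prime ∧ q < N then 1 / (q : ℝ) else 0) := by
    funext q
    rw [Set.indicator_apply]
    by_cases hq : q.Prime
    · rcases Nat.lt_or_ge q N with h | h
      · simp [hq, h, Nat.not_le.2 h, Set.mem_setOf_eq]
      · simp [hq, h, Nat.not_lt.2 h, Set.mem_setOf_eq]
    · simp [hq, Set.mem_setOf_eq]
  rw [heq]
  exact hg2.add hg3

lemma exists_finset_close (t ε : ℝ) (ht0 : 0 ≤ t) (ht1 : t ≤ 1) (hε : 0 < ε) :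
    ∃ S : Finset ℕ, (∀ p ∈ S, p.Prime ∧ p ≠ 2) ∧ |(∏ p ∈ S, fp p) - t| < ε := by
  classical
  obtain ⟨N0, hN0⟩ := exists_nat_gt (4 / ε)
  set N := max N0 3 with hN
  let T : ℕ → Finset ℕ := fun n => (range n).filter (fun q => q.Prime ∧ N ≤ q)
  let Q : ℕ → ℝ := fun n => ∏ q ∈ T n, fp q
  have hQdef : ∀ n, Q n = ∏ q ∈ T n, fp q := fun n => rfl
  have hQpos : ∀ n, 0 < Q n := fun n => prod_pos (fun q _ => fp_pos q)
  have hQle1 : ∀ n, Q n ≤ 1 :=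
    fun n => prod_le_one (fun q _ => (fp_pos q).le) (fun q _ => fp_le_one q)
  have hsmall : ∀ q : ℕ, q.Prime ∧ N ≤ q → 1 / ((q : ℝ) + 2) < ε / 4 := by
    intro q hq
    have h0 : (N0 : ℝ) ≤ q := by exact_mod_cast le_trans (le_max_left N0 3) hq.2
    have hq2 : (4 : ℝ) / ε < (q : ℝ) + 2 := lt_of_lt_of_le hN0 (by linarith)
    rw [div_lt_iff₀ (show (0:ℝ) < (q : ℝ) + 2 by positivity)]
    rw [div_lt_iff₀ hε] at hq2
    nlinarith
  have hstep : ∀ n, Q n - ε / 4 < Q (n + 1) ∧ Q (n + 1) ≤ Q n := by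
    intro n
    have hT1 : T (n + 1) = if n.Prime ∧ N ≤ n then insert n (T n) else T n := by
      show (range (n+1)).filter _ = _
      rw [range_add_one, filter_insert]
    by_cases h : n.Prime ∧ N ≤ n
    · have hnot : n ∉ T n := fun hc => by
        have := (mem_filter.1 hc).1
        exact absurd this (by simp)
      have hQn : Q (n + 1) = fp n * Q n := by
        rw [hQdef, hQdef, hT1, if_pos h, prod_insert hnot]
      have hf : 1 - ε / 4 < fp n := by
        rw [fp_eq]
        have := hsmall n h
        linarith
      have h1 := hQpos n
      have h2 := hQle1 n
      have h3 := fp_le_one n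
      constructor
      · rw [hQn]; nlinarith
      · rw [hQn]; nlinarith
    · have hQn : Q (n + 1) = Q n := by
        rw [hQdef, hQdef, hT1, if_neg h]
      rw [hQn]
      have := hQpos n
      constructor <;> linarith
  have hQ0 : ∃ n, Q n < t + ε / 2 := by
    have hdiv : Filter.Tendsto (fun n => ∑ q ∈ range n,
        (if q.Prime ∧ N ≤ q then 1 / ((q : ℝ) + 2) else 0)) Filter.atTop Filter.atTop :=
      (not_summable_iff_tendsto_nat_atTop_of_nonneg (fun q => by positivity)).1 (not_summable_g N)
    obtain ⟨n, hn⟩ := (Filter.tendsto_atTop.1 hdiv (Real.log (2 / (t + ε / 2)) + 1)).exists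
    refine ⟨n, ?_⟩
    have hsum : ∑ q ∈ range n, (if q.Prime ∧ N ≤ q then 1 / ((q : ℝ) + 2) else 0)
        = ∑ q ∈ T n, 1 / ((q : ℝ) + 2) := (sum_filter _ _).symm
    have hQexp : Q n ≤ Real.exp (-(∑ q ∈ T n, 1 / ((q : ℝ) + 2))) := by
      rw [hQdef, ← Finset.sum_neg_distrib, Real.exp_sum]
      refine prod_le_prod (fun q _ => (fp_pos q).le) (fun q _ => ?_)
      rw [fp_eq]
      have := Real.add_one_le_exp (-(1 / ((q : ℝ) + 2)))
      linarith
    have htpos : 0 < t + ε / 2 := by linarith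
    have hlt : Real.exp (-(∑ q ∈ T n, 1 / ((q : ℝ) + 2))) < t + ε / 2 := by
      have hlog2 : Real.log (2 / (t + ε / 2)) = Real.log 2 - Real.log (t + ε / 2) :=
        Real.log_div (by norm_num) htpos.ne'
      have hl2 : 0 < Real.log 2 := Real.log_pos (by norm_num)
      have hA : -(∑ q ∈ T n, 1 / ((q : ℝ) + 2)) < Real.log (t + ε / 2) := by
        rw [← hsum]
        rw [hlog2] at hn
        linarith
      calc Real.exp (-(∑ q ∈ T n, 1 / ((q : ℝ) + 2))) < Real.exp (Real.log (t + ε / 2)) :=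
            Real.exp_lt_exp.2 hA
      _ = t + ε / 2 := Real.exp_log htpos
    exact lt_of_le_of_lt hQexp hlt
  set n₀ := Nat.find hQ0 with hn₀def
  have hfind : Q n₀ < t + ε / 2 := Nat.find_spec hQ0
  refine ⟨T n₀, fun p hp => ?_, ?_⟩
  · obtain ⟨_, hp2⟩ := mem_filter.1 hp
    refine ⟨hp2.1, ?_⟩
    have h3 : 3 ≤ N := le_max_right N0 3
    omega
  · show |Q n₀ - t| < ε
    rw [abs_lt]
    constructor
    · rcases Nat.eq_zero_or_pos n₀ with h0 | hpos
      · have : Q n₀ = 1 := by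
          rw [h0]
          show ∏ q ∈ (range 0).filter _, fp q = 1
          simp
        rw [this]
        linarith
      · obtain ⟨m, hm⟩ : ∃ m, n₀ = m + 1 := ⟨n₀ - 1, by omega⟩
        rw [hm] at hfind ⊢
        have hQm : ¬ Q m < t + ε / 2 := Nat.find_min hQ0 (by omega)
        push_neg at hQm
        have := (hstep m).1
        linarith
    · linarith
end analytic

lemma realize (S : Finset ℕ) (hS : ∀ p ∈ S, p.Prime ∧ p ≠ 2) :
    ∃ (G : Type) (_ : Group G) (_ : Finite G),
      (numInv G : ℝ) / (numCyc G : ℝ) = ∏ p ∈ S, fp p := by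
  have hl : ∀ p ∈ S.toList, p.Prime ∧ p ≠ 2 := fun p hp => hS p (Finset.mem_toList.1 hp)
  obtain ⟨h1, h2, _⟩ := GG.counts S.toList hl S.nodup_toList
  refine ⟨GG S.toList, GG.group S.toList,
    GG.finite S.toList (fun p hp => (hl p hp).1.ne_zero), ?_⟩
  rw [h1, h2, Nat.cast_list_prod, Nat.cast_list_prod, List.map_map, List.map_map]
  have e1 : (((↑) : ℕ → ℝ) ∘ (· + 1)) = fun p : ℕ => ((p : ℝ) + 1) := by funext p; simp
  have e2 : (((↑) : ℕ → ℝ) ∘ (· + 2)) = fun p : ℕ => ((p : ℝ) + 2) := by funext p; simp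
  rw [e1, e2, Finset.prod_map_toList, Finset.prod_map_toList, ← Finset.prod_div_distrib]
  rfl

theorem stmt_17 :
    Set.Icc (0 : ℝ) 1 ⊆
      closure {x : ℝ | ∃ (G : Type) (_ : Group G) (_ : Finite G),
        x = (numInv G : ℝ) / (numCyc G : ℝ)} := by
  intro t ht
  rw [Metric.mem_closure_iff]
  intro ε hε
  obtain ⟨S, hS, hclose⟩ := exists_finset_close t ε ht.1 ht.2 hε
  obtain ⟨G, g, fin, heq⟩ := realize S hS
  exact ⟨(numInv G : ℝ) / (numCyc G : ℝ), ⟨G, g, fin, rfl⟩, by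
    rw [Real.dist_eq, heq, abs_sub_comm]
    exact hclose⟩
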